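/- arXiv:2605.04961 — 2 statements merged into one kernel-verified Lean document; each statement's English description precedes it below -/
import Mathlib

section
/- Let Γ be an (m(p+1))×p real matrix and Σ an (m(p+1))×(m(p+1)) symmetric positive definite matrix such that Γ'Σ⁻¹Γ is invertible. For any p×(m(p+1)) matrix Λ with ΛΓ invertible, the matrix (ΛΓ)⁻¹(ΛΣΛ')((ΛΓ)⁻¹)' − (Γ'Σ⁻¹Γ)⁻¹ is positive semidefinite. -/
open Matrix

theorem stmt0 (m p : ℕ)
    (Γ : Matrix (Fin (m * (p + 1))) (Fin p) ℝ)
    (S : Matrix (Fin (m * (p + 1))) (Fin (m * (p + 1))) ℝ)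
    (hS : S.PosDef)
    (hinfo : IsUnit (Γᵀ * S⁻¹ * Γ))
    (Λ : Matrix (Fin p) (Fin (m * (p + 1))) ℝ)
    (hΛΓ : IsUnit (Λ * Γ)) :
    ((Λ * Γ)⁻¹ * (Λ * S * Λᵀ) * ((Λ * Γ)⁻¹)ᵀ - (Γᵀ * S⁻¹ * Γ)⁻¹).PosSemidef := by
  set G := Γᵀ * S⁻¹ * Γ with hG
  have hSdet : IsUnit S.det := (Matrix.isUnit_iff_isUnit_det _).mp hS.isUnit
  have hSS : S * S⁻¹ = 1 := Matrix.mul_nonsing_inv S hSdet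
  have hSiS : S⁻¹ * S = 1 := Matrix.nonsing_inv_mul S hSdet
  have hST : Sᵀ = S := by
    have := hS.1.eq
    rwa [Matrix.conjTranspose_eq_transpose_of_trivial] at this
  have hSiT : S⁻¹ᵀ = S⁻¹ := by rw [Matrix.transpose_nonsing_inv, hST]
  have hGT : Gᵀ = G := by
    rw [hG, Matrix.transpose_mul, Matrix.transpose_mul, Matrix.transpose_transpose,
      hSiT, Matrix.mul_assoc]
  have hGdet : IsUnit G.det := (Matrix.isUnit_iff_isUnit_det _).mp hinfo
  have hGiG : G⁻¹ * G = 1 := Matrix.nonsing_inv_mul G hGdet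
  have hGGi : G * G⁻¹ = 1 := Matrix.mul_nonsing_inv G hGdet
  have hGiT : (G⁻¹)ᵀ = G⁻¹ := by rw [Matrix.transpose_nonsing_inv, hGT]
  have hLdet : IsUnit (Λ * Γ).det := (Matrix.isUnit_iff_isUnit_det _).mp hΛΓ
  have hLGi : (Λ * Γ)⁻¹ * (Λ * Γ) = 1 := Matrix.nonsing_inv_mul _ hLdet
  set A := (Λ * Γ)⁻¹ * Λ with hA
  set B := G⁻¹ * (Γᵀ * S⁻¹) with hB
  have hBT : Bᵀ = S⁻¹ * Γ * G⁻¹ := by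
    rw [hB, Matrix.transpose_mul, Matrix.transpose_mul, Matrix.transpose_transpose,
      hSiT, hGiT]
  have hASB : A * S * Bᵀ = G⁻¹ := by
    rw [hBT, hA]
    calc (Λ * Γ)⁻¹ * Λ * S * (S⁻¹ * Γ * G⁻¹)
        = (Λ * Γ)⁻¹ * (Λ * (S * S⁻¹) * Γ) * G⁻¹ := by
          simp only [Matrix.mul_assoc]
      _ = (Λ * Γ)⁻¹ * (Λ * Γ) * G⁻¹ := by rw [hSS, Matrix.mul_one]
      _ = G⁻¹ := by rw [hLGi, Matrix.one_mul]
  have hBSB : B * S * Bᵀ = G⁻¹ := by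
    rw [hBT, hB]
    calc G⁻¹ * (Γᵀ * S⁻¹) * S * (S⁻¹ * Γ * G⁻¹)
        = G⁻¹ * (Γᵀ * ((S⁻¹ * S) * S⁻¹) * Γ) * G⁻¹ := by
          simp only [Matrix.mul_assoc]
      _ = G⁻¹ * G * G⁻¹ := by rw [hSiS, Matrix.one_mul, hG, Matrix.mul_assoc]
      _ = G⁻¹ := by rw [hGiG, Matrix.one_mul]
  have hAG : A * Γ = 1 := by rw [hA, Matrix.mul_assoc, hLGi]
  have hBSA : B * S * Aᵀ = G⁻¹ := by
    calc B * S * Aᵀ = G⁻¹ * (Γᵀ * ((S⁻¹ * S) * Aᵀ)) := by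
          rw [hB]; simp only [Matrix.mul_assoc]
      _ = G⁻¹ * (A * Γ)ᵀ := by
          rw [hSiS, Matrix.one_mul, hA]
          simp only [Matrix.transpose_mul, Matrix.mul_assoc]
      _ = G⁻¹ := by rw [hAG, Matrix.transpose_one, Matrix.mul_one]
  have hASA : A * S * Aᵀ = (Λ * Γ)⁻¹ * (Λ * S * Λᵀ) * ((Λ * Γ)⁻¹)ᵀ := by
    rw [hA, Matrix.transpose_mul]
    simp only [Matrix.mul_assoc]
  have key : (Λ * Γ)⁻¹ * (Λ * S * Λᵀ) * ((Λ * Γ)⁻¹)ᵀ - G⁻¹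
      = (A - B) * S * (A - B)ᵀ := by
    rw [Matrix.transpose_sub, Matrix.sub_mul, Matrix.sub_mul, Matrix.mul_sub,
      Matrix.mul_sub, hASB, hBSA, hBSB, hASA]
    abel
  rw [key]
  have h := hS.posSemidef.mul_mul_conjTranspose_same (A - B)
  rwa [Matrix.conjTranspose_eq_transpose_of_trivial] at h
end

section
/- Let Σ₁₁ and Σ₁₁,₂ = Σ₁₁ − Σ₁₂Σ₂₂⁻¹Σ₂₁ come from a symmetric positive definite block matrix Σ (Σ₂₁ = Σ₁₂'), and let G be an m×p matrix such that both G'Σ₁₁⁻¹G and G'Σ₁₁,₂⁻¹G are invertible. Then (G'Σ₁₁⁻¹G)⁻¹ − (G'Σ₁₁,₂⁻¹G)⁻¹ is positive semidefinite. -/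
open Matrix

/-- A positive semidefinite real matrix that is a unit is positive definite. -/
lemma aux_psd_isUnit_posDef {n : ℕ} {M : Matrix (Fin n) (Fin n) ℝ}
    (h : M.PosSemidef) (hu : IsUnit M) : M.PosDef := by
  exact h.posDef_iff_isUnit.mpr hu

/-- Loewner antitonicity of inversion for positive definite real matrices. -/
lemma aux_inv_antitone {n : ℕ} {A B : Matrix (Fin n) (Fin n) ℝ}
    (hA : A.PosDef) (hB : B.PosDef) (hAB : (B - A).PosSemidef) :
    (A⁻¹ - B⁻¹).PosSemidef := by
  haveI : Invertible A := hA.isUnit.invertible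
  haveI : Invertible B := hB.isUnit.invertible
  have hAinv : (A⁻¹).PosDef := Matrix.posDef_inv_iff.mpr hA
  haveI : Invertible (A⁻¹) := hAinv.isUnit.invertible
  have key : (fromBlocks B (1 : Matrix (Fin n) (Fin n) ℝ)
      (1 : Matrix (Fin n) (Fin n) ℝ)ᴴ A⁻¹).PosSemidef := by
    rw [Matrix.PosDef.fromBlocks₂₂ _ _ hAinv]
    have h : B - 1 * (A⁻¹)⁻¹ * (1 : Matrix (Fin n) (Fin n) ℝ)ᴴ = B - A := by
      rw [inv_inv_of_invertible]; simp
    rw [h]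
    exact hAB
  have h2 := (Matrix.PosDef.fromBlocks₁₁ _ _ hB).mp key
  have heq : A⁻¹ - (1 : Matrix (Fin n) (Fin n) ℝ)ᴴ * B⁻¹ * 1 = A⁻¹ - B⁻¹ := by simp
  rwa [heq] at h2

theorem stmt9 (m k p : ℕ)
    (G : Matrix (Fin m) (Fin p) ℝ)
    (S11 : Matrix (Fin m) (Fin m) ℝ) (S12 : Matrix (Fin m) (Fin k) ℝ)
    (S21 : Matrix (Fin k) (Fin m) ℝ) (S22 : Matrix (Fin k) (Fin k) ℝ)
    (h21 : S21 = S12ᵀ)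
    (hS : (Matrix.fromBlocks S11 S12 S21 S22).PosDef)
    (h1 : IsUnit (Gᵀ * S11⁻¹ * G))
    (h2 : IsUnit (Gᵀ * (S11 - S12 * S22⁻¹ * S21)⁻¹ * G)) :
    ((Gᵀ * S11⁻¹ * G)⁻¹ - (Gᵀ * (S11 - S12 * S22⁻¹ * S21)⁻¹ * G)⁻¹).PosSemidef := by
  subst h21
  have h12H : S12ᵀ = S12ᴴ := (conjTranspose_eq_transpose_of_trivial S12).symm
  rw [h12H] at hS h2 ⊢
  have hGH : Gᴴ = Gᵀ := conjTranspose_eq_transpose_of_trivial G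
  -- S11 is positive definite
  have hS11 : S11.PosDef := by
    refine Matrix.PosDef.of_dotProduct_mulVec_pos ?_ fun x hx => ?_
    · have h := hS.1
      rw [Matrix.IsHermitian, fromBlocks_conjTranspose] at h
      have := congrArg Matrix.toBlocks₁₁ h
      simpa [Matrix.toBlocks_fromBlocks₁₁, Matrix.IsSymm] using this
    · have hv : (Sum.elim x 0 : Fin m ⊕ Fin k → ℝ) ≠ 0 := by
        intro hcontra
        exact hx (by ext i; exact congrFun hcontra (Sum.inl i))
      have hq := hS.dotProduct_mulVec_pos hv
      simpa only [Function.star_sumElim, star_zero, fromBlocks_mulVec, Sum.elim_comp_inl,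
        Sum.elim_comp_inr, mulVec_zero, add_zero, sumElim_dotProduct_sumElim,
        zero_dotProduct] using hq
  -- S22 is positive definite
  have hS22 : S22.PosDef := by
    refine Matrix.PosDef.of_dotProduct_mulVec_pos ?_ fun x hx => ?_
    · have h := hS.1
      rw [Matrix.IsHermitian, fromBlocks_conjTranspose] at h
      have := congrArg Matrix.toBlocks₂₂ h
      simpa [Matrix.toBlocks_fromBlocks₂₂, Matrix.IsSymm] using this
    · have hv : (Sum.elim 0 x : Fin m ⊕ Fin k → ℝ) ≠ 0 := by
        intro hcontra
        exact hx (by ext i; exact congrFun hcontra (Sum.inr i))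
      have hq := hS.dotProduct_mulVec_pos hv
      simpa only [Function.star_sumElim, star_zero, fromBlocks_mulVec, Sum.elim_comp_inl,
        Sum.elim_comp_inr, mulVec_zero, zero_add, sumElim_dotProduct_sumElim,
        zero_dotProduct] using hq
  haveI : Invertible S22 := hS22.isUnit.invertible
  -- the Schur complement is positive definite
  set Sc := S11 - S12 * S22⁻¹ * S12ᴴ with hSc_def
  have hSc : Sc.PosDef := by
    refine Matrix.PosDef.of_dotProduct_mulVec_pos ?_ fun x hx => ?_
    · exact hS11.1.sub (Matrix.isHermitian_mul_mul_conjTranspose S12 hS22.1.inv)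
    · have hv : (Sum.elim x (-((S22⁻¹ * S12ᴴ) *ᵥ x)) : Fin m ⊕ Fin k → ℝ) ≠ 0 := by
        intro hcontra
        exact hx (by ext i; exact congrFun hcontra (Sum.inl i))
      have hq := hS.dotProduct_mulVec_pos hv
      rw [dotProduct_mulVec, Matrix.schur_complement_eq₂₂ S11 S12 x _ hS22.1,
        add_neg_cancel, star_zero, zero_vecMul, zero_dotProduct, zero_add] at hq
      rw [dotProduct_mulVec]
      exact hq
  haveI : Invertible S11 := hS11.isUnit.invertible
  haveI : Invertible Sc := hSc.isUnit.invertible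
  -- S11 - Sc is positive semidefinite
  have hdiff : (S11 - Sc).PosSemidef := by
    have h : S11 - Sc = S12 * S22⁻¹ * S12ᴴ := sub_sub_cancel _ _
    rw [h]
    exact (Matrix.posDef_inv_iff.mpr hS22).posSemidef.mul_mul_conjTranspose_same S12
  -- hence Sc⁻¹ - S11⁻¹ is positive semidefinite
  have hinv : (Sc⁻¹ - S11⁻¹).PosSemidef := aux_inv_antitone hSc hS11 hdiff
  -- conjugate by G
  have hGdiff : (Gᵀ * Sc⁻¹ * G - Gᵀ * S11⁻¹ * G).PosSemidef := by
    have h := hinv.conjTranspose_mul_mul_same G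
    rw [hGH] at h
    have heq : Gᵀ * (Sc⁻¹ - S11⁻¹) * G = Gᵀ * Sc⁻¹ * G - Gᵀ * S11⁻¹ * G := by
      rw [Matrix.mul_sub, Matrix.sub_mul]
    rwa [heq] at h
  -- both conjugated matrices are positive definite
  have hA : (Gᵀ * S11⁻¹ * G).PosDef := by
    refine aux_psd_isUnit_posDef ?_ h1
    have h := (Matrix.posDef_inv_iff.mpr hS11).posSemidef.conjTranspose_mul_mul_same G
    rwa [hGH] at h
  have hB : (Gᵀ * Sc⁻¹ * G).PosDef := by
    refine aux_psd_isUnit_posDef ?_ h2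
    have h := (Matrix.posDef_inv_iff.mpr hSc).posSemidef.conjTranspose_mul_mul_same G
    rwa [hGH] at h
  exact aux_inv_antitone hA hB hGdiff
end
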